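/- If (M, Δ) is a Garside monoid, then the left domino rule is valid for Δ-normal words of length two: whenever s_1, s_2, s'_1, s'_2, t_0, t_1, t_2 lie in Div(Δ) and satisfy s'_1 t_1 = t_0 s_1 and s'_2 t_2 = t_1 s_2 in M, if the words s_1|s_2, s'_1|t_1 and s'_2|t_2 are Δ-normal, then s'_1|s'_2 is Δ-normal. -/
import Mathlib


/-- Left-divisibility: `f ≼ g` iff `f * c = g` for some `c`. -/
def LDvd {M : Type*} [Monoid M] (f g : M) : Prop := ∃ c, f * c = g

/-- Right-divisibility: `f` right-divides `g` iff `c * f = g` for some `c`. -/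
def RDvd {M : Type*} [Monoid M] (f g : M) : Prop := ∃ c, c * f = g

/-- A Garside monoid: a cancellative monoid `M` together with a Garside element `Δ`,
satisfying conditions (i)–(iv) of the definition. -/
structure GarsideMonoid (M : Type*) [Monoid M] where
  /-- The Garside element. -/
  Δ : M
  mul_left_cancel : ∀ a b c : M, a * b = a * c → b = c
  mul_right_cancel : ∀ a b c : M, b * a = c * a → b = c
  /-- (i) a superadditive length-type map. -/
  lam : M → ℕ
  lam_superadd : ∀ f g : M, lam f + lam g ≤ lam (f * g)
  lam_ne_zero : ∀ g : M, g ≠ 1 → lam g ≠ 0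
  /-- (ii) any two elements admit a left-gcd. -/
  exists_left_gcd : ∀ f g : M, ∃ d, LDvd d f ∧ LDvd d g ∧ ∀ e, LDvd e f → LDvd e g → LDvd e d
  /-- (ii) any two elements admit a right-lcm. -/
  exists_right_lcm : ∀ f g : M, ∃ m, LDvd f m ∧ LDvd g m ∧ ∀ e, LDvd f e → LDvd g e → LDvd m e
  /-- (ii) any two elements admit a right-gcd. -/
  exists_right_gcd : ∀ f g : M, ∃ d, RDvd d f ∧ RDvd d g ∧ ∀ e, RDvd e f → RDvd e g → RDvd e d
  /-- (ii) any two elements admit a left-lcm. -/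
  exists_left_lcm : ∀ f g : M, ∃ m, RDvd f m ∧ RDvd g m ∧ ∀ e, RDvd f e → RDvd g e → RDvd m e
  /-- (iii) the left- and right-divisors of `Δ` coincide. -/
  ldvd_iff_rdvd : ∀ d : M, LDvd d Δ ↔ RDvd d Δ
  /-- (iii) the divisors of `Δ` generate `M`. -/
  closure_div : Submonoid.closure {d : M | LDvd d Δ} = ⊤
  /-- (iv) `Div(Δ)` is finite. -/
  div_finite : {d : M | LDvd d Δ}.Finite

/-- A word `s_1|…|s_p` (with entries in `Div(Δ)`) is `Δ`-normal if, for every `i < p` and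
every `s ∈ Div(Δ)`, `s_i ≺ s` implies that `s` does not left-divide `s_i s_{i+1} ⋯ s_p`. -/
def DNormal {M : Type*} [Monoid M] (G : GarsideMonoid M) (L : List M) : Prop :=
  ∀ i : ℕ, i + 1 < L.length → ∀ s : M, LDvd s G.Δ →
    LDvd (L.getD i 1) s → L.getD i 1 ≠ s → ¬ LDvd s ((L.drop i).prod)


lemma GarsideMonoid.lam_one_aux {M : Type*} [Monoid M] (G : GarsideMonoid M) : G.lam 1 = 0 := by
  have := G.lam_superadd 1 1
  rw [mul_one] at this
  omega

lemma ldvd_antisymm {M : Type*} [Monoid M] (G : GarsideMonoid M) {a b : M}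
    (h1 : LDvd a b) (h2 : LDvd b a) : a = b := by
  obtain ⟨u, hu⟩ := h1
  obtain ⟨v, hv⟩ := h2
  have huv : a * (u * v) = a * 1 := by rw [← mul_assoc, hu, hv, mul_one]
  have huv1 : u * v = 1 := G.mul_left_cancel _ _ _ huv
  have hlam : G.lam u = 0 := by
    have := G.lam_superadd u v
    rw [huv1, G.lam_one_aux] at this
    omega
  have hu1 : u = 1 := by
    by_contra h
    exact G.lam_ne_zero u h hlam
  rw [← hu, hu1, mul_one]

lemma garside_head_lemma {M : Type*} [Monoid M] (G : GarsideMonoid M) (a b : M)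
    (ha : LDvd a G.Δ) (n : DNormal G [a, b]) :
    ∀ s, LDvd s G.Δ → LDvd s (a * b) → LDvd s a := by
  intro s hs hsab
  obtain ⟨m, ham, hsm, hmin⟩ := G.exists_right_lcm a s
  have hmΔ : LDvd m G.Δ := hmin _ ha hs
  have hmab : LDvd m (a * b) := hmin _ ⟨b, rfl⟩ hsab
  by_cases h : a = m
  · rw [← h] at hsm; exact hsm
  · exfalso
    refine n 0 (by norm_num) m hmΔ ham h ?_
    simp only [List.drop_zero, List.prod_cons, List.prod_nil, mul_one]
    exact hmab

/-- In a Garside monoid `(M, Δ)`, the left domino rule is valid for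
`Δ`-normal words of length two. -/
theorem garsideMonoid_left_domino_rule {M : Type*} [Monoid M] (G : GarsideMonoid M)
    (s₁ s₂ s₁' s₂' t₀ t₁ t₂ : M)
    (hs₁ : LDvd s₁ G.Δ) (hs₂ : LDvd s₂ G.Δ) (hs₁' : LDvd s₁' G.Δ) (hs₂' : LDvd s₂' G.Δ)
    (ht₀ : LDvd t₀ G.Δ) (ht₁ : LDvd t₁ G.Δ) (ht₂ : LDvd t₂ G.Δ)
    (e₁ : s₁' * t₁ = t₀ * s₁) (e₂ : s₂' * t₂ = t₁ * s₂)
    (n₁ : DNormal G [s₁, s₂]) (n₂ : DNormal G [s₁', t₁]) (n₃ : DNormal G [s₂', t₂]) :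
    DNormal G [s₁', s₂'] := by
  intro i hi s hsΔ hs1's hne hdvd
  simp only [List.length_cons, List.length_nil] at hi
  have hi0 : i = 0 := by omega
  subst hi0
  simp only [List.getD_cons_zero] at hs1's hne
  have hdvd' : LDvd s (s₁' * s₂') := by
    simpa only [List.drop_zero, List.prod_cons, List.prod_nil, mul_one] using hdvd
  have h1 : LDvd s (t₀ * (s₁ * s₂)) := by
    obtain ⟨c, hc⟩ := hdvd'
    refine ⟨c * t₂, ?_⟩
    rw [← mul_assoc, hc, mul_assoc, e₂, ← mul_assoc, e₁, mul_assoc]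
  obtain ⟨m, htm, hsm, hmin⟩ := G.exists_right_lcm t₀ s
  obtain ⟨u, hu⟩ := htm
  have hmΔ : LDvd m G.Δ := hmin _ ht₀ hsΔ
  have huΔ : LDvd u G.Δ := by
    obtain ⟨c, hc⟩ := (G.ldvd_iff_rdvd m).1 hmΔ
    exact (G.ldvd_iff_rdvd u).2 ⟨c * t₀, by rw [mul_assoc, hu, hc]⟩
  have hm_div : LDvd m (t₀ * (s₁ * s₂)) := hmin _ ⟨s₁ * s₂, rfl⟩ h1
  have hu_div : LDvd u (s₁ * s₂) := by
    obtain ⟨x, hx⟩ := hm_div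
    refine ⟨x, G.mul_left_cancel t₀ _ _ ?_⟩
    rw [← mul_assoc, hu, hx]
  have hu_s1 : LDvd u s₁ := garside_head_lemma G s₁ s₂ hs₁ n₁ u huΔ hu_div
  have hs_s1t1 : LDvd s (s₁' * t₁) := by
    obtain ⟨w, hw⟩ := hu_s1
    obtain ⟨v, hv⟩ := hsm
    refine ⟨v * w, ?_⟩
    rw [← mul_assoc, hv, ← hu, mul_assoc, hw, e₁]
  have hs_s1' : LDvd s s₁' := garside_head_lemma G s₁' t₁ hs₁' n₂ s hsΔ hs_s1t1
  exact hne (ldvd_antisymm G hs1's hs_s1')
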